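/- Let δ > 0 and d ≥ 1. Then ∫₀¹ ∫₀^{ρ²} u^{δ/2 - 1} r^{d-1} / (√u + r)^d du dr ≤ C ρ^{δ/2}, for every ρ > 0 with ρ ≤ 1, where C depends only on d and δ. -/

import Mathlib

open MeasureTheory Real Set

-- integrability and value of x^p on Ioo 0 c
lemma aux_rpow_integrableOn {p : ℝ} (hp : -1 < p) {c : ℝ} (hc : 0 < c) :
    IntegrableOn (fun x : ℝ => x ^ p) (Ioo 0 c) := by
  have h1 : IntervalIntegrable (fun x : ℝ => x ^ p) volume 0 c :=
    intervalIntegral.intervalIntegrable_rpow' hp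
  exact ((intervalIntegrable_iff_integrableOn_Ioc_of_le hc.le).1 h1).mono_set
    Ioo_subset_Ioc_self

lemma aux_rpow_integral {p : ℝ} (hp : -1 < p) {c : ℝ} (hc : 0 < c) :
    ∫ x in Ioo (0:ℝ) c, x ^ p = c ^ (p+1) / (p+1) := by
  rw [← integral_Ioc_eq_integral_Ioo, ← intervalIntegral.integral_of_le hc.le,
    integral_rpow (Or.inl hp)]
  rw [Real.zero_rpow (by linarith)]
  ring

-- pointwise bound
lemma aux_pointwise (d : ℕ) (hd : 1 ≤ d) (α θ : ℝ) (hθ0 : 0 < θ) (hθ1 : θ ≤ 1)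
    {u r : ℝ} (hu : 0 < u) (hr : 0 < r) :
    u ^ (α - 1) * r ^ (d-1) / (Real.sqrt u + r) ^ d
      ≤ u ^ (α - θ/2 - 1) * r ^ (θ - 1) := by
  have hs : 0 < Real.sqrt u := Real.sqrt_pos.2 hu
  have hsr : 0 < Real.sqrt u + r := by linarith
  have huθ : u ^ (θ/2) = (Real.sqrt u) ^ θ := by
    rw [Real.sqrt_eq_rpow, ← Real.rpow_mul hu.le]
    ring_nf
  have hgm : (Real.sqrt u) ^ θ * r ^ (1-θ) ≤ Real.sqrt u + r := by
    have := Real.geom_mean_le_arith_mean2_weighted (by positivity : (0:ℝ) ≤ θ)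
      (by linarith : (0:ℝ) ≤ 1 - θ) hs.le hr.le (by ring)
    nlinarith [this, mul_nonneg hθ0.le hs.le, mul_nonneg (by linarith : (0:ℝ) ≤ 1-θ) hr.le]
  have hrd : r ^ (d-1) ≤ (Real.sqrt u + r) ^ (d-1) :=
    pow_le_pow_left₀ hr.le (by linarith) _
  have hkey : r ^ (d-1) * (u ^ (θ/2) * r ^ (1-θ)) ≤ (Real.sqrt u + r) ^ d := by
    have h2 : (Real.sqrt u + r) ^ d = (Real.sqrt u + r) ^ (d-1) * (Real.sqrt u + r) := by
      conv_lhs => rw [← Nat.succ_pred_eq_of_pos hd]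
      rw [pow_succ]
      rfl
    rw [h2, huθ]
    have h3 : (0:ℝ) ≤ (Real.sqrt u) ^ θ * r ^ (1-θ) := by positivity
    exact mul_le_mul hrd hgm h3 (by positivity)
  have hpos : (0:ℝ) < r ^ (d-1) * (u ^ (θ/2) * r ^ (1-θ)) := by positivity
  calc u ^ (α - 1) * r ^ (d-1) / (Real.sqrt u + r) ^ d
      ≤ u ^ (α - 1) * r ^ (d-1) / (r ^ (d-1) * (u ^ (θ/2) * r ^ (1-θ))) := by
        apply div_le_div_of_nonneg_left (by positivity) hpos hkey
    _ = u ^ (α - θ/2 - 1) * r ^ (θ - 1) := by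
        have h1 : u ^ (α - θ/2 - 1) = u ^ (α-1) / u ^ (θ/2) := by
          rw [← Real.rpow_sub hu]; ring_nf
        have h2 : r ^ (θ - 1) = (r ^ (1-θ))⁻¹ := by
          rw [← Real.rpow_neg hr.le]; ring_nf
        have hu1 : u ^ (θ/2) ≠ 0 := by positivity
        have hr1 : r ^ (1-θ) ≠ 0 := by positivity
        have hr2 : (r:ℝ) ^ (d-1) ≠ 0 := by positivity
        rw [h1, h2]
        field_simp

theorem stmt16 (d : ℕ) (hd : 1 ≤ d) (δ : ℝ) (hδ : 0 < δ) :
    ∃ C > 0, ∀ ρ : ℝ, 0 < ρ → ρ ≤ 1 →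
      ∫ r in Ioo (0:ℝ) 1, ∫ u in Ioo (0:ℝ) (ρ^2),
          u ^ (δ/2 - 1) * r ^ (d-1) / (Real.sqrt u + r) ^ d
        ≤ C * ρ ^ (δ/2) := by
  set α := δ/2 with hα
  have hα0 : 0 < α := by positivity
  set θ := min α 1 with hθ
  have hθ0 : 0 < θ := lt_min hα0 one_pos
  have hθ1 : θ ≤ 1 := min_le_right _ _
  have hθα : θ ≤ α := min_le_left _ _
  have hp : 0 < α - θ/2 := by
    have : θ/2 < α := by linarith
    linarith
  refine ⟨1/((α - θ/2)*θ), by positivity, ?_⟩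
  intro ρ hρ0 hρ1
  have hρ2 : 0 < ρ^2 := by positivity
  -- inner bound
  set K : ℝ := (ρ^2) ^ (α - θ/2) / (α - θ/2) with hK
  have hK0 : 0 ≤ K := by positivity
  have hinner : ∀ r ∈ Ioo (0:ℝ) 1,
      (∫ u in Ioo (0:ℝ) (ρ^2), u ^ (α - 1) * r ^ (d-1) / (Real.sqrt u + r) ^ d)
        ≤ K * r ^ (θ - 1) := by
    intro r hr
    have hr0 : 0 < r := hr.1
    have hgint : IntegrableOn (fun u : ℝ => u ^ (α - θ/2 - 1) * r ^ (θ-1)) (Ioo 0 (ρ^2)) :=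
      (aux_rpow_integrableOn (by linarith) hρ2).mul_const _
    have hmono := integral_mono_of_nonneg (μ := volume.restrict (Ioo (0:ℝ) (ρ^2)))
      (f := fun u => u ^ (α - 1) * r ^ (d-1) / (Real.sqrt u + r) ^ d)
      (g := fun u => u ^ (α - θ/2 - 1) * r ^ (θ-1))
      ?_ hgint ?_
    · refine hmono.trans_eq ?_
      rw [MeasureTheory.integral_mul_const, aux_rpow_integral (by linarith) hρ2]
      rw [hK]
      ring_nf
    · filter_upwards [ae_restrict_mem measurableSet_Ioo] with u hu
      have hu0 : 0 < u := hu.1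
      positivity
    · filter_upwards [ae_restrict_mem measurableSet_Ioo] with u hu
      exact aux_pointwise d hd α θ hθ0 hθ1 hu.1 hr0
  -- outer bound
  have hhint : Integrable (fun r : ℝ => K * r ^ (θ-1)) (volume.restrict (Ioo (0:ℝ) 1)) :=
    (aux_rpow_integrableOn (by linarith) one_pos).const_mul _
  have houter := integral_mono_of_nonneg (μ := volume.restrict (Ioo (0:ℝ) 1))
    (f := fun r => ∫ u in Ioo (0:ℝ) (ρ^2), u ^ (α - 1) * r ^ (d-1) / (Real.sqrt u + r) ^ d)
    (g := fun r => K * r ^ (θ-1)) ?_ hhint ?_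
  · refine houter.trans ?_
    rw [MeasureTheory.integral_const_mul, aux_rpow_integral (by linarith) one_pos]
    rw [Real.one_rpow]
    have hKbound : (ρ^2) ^ (α - θ/2) ≤ ρ ^ α := by
      have h1 : (ρ^2 : ℝ) ^ (α - θ/2) = ρ ^ (2*(α - θ/2)) := by
        rw [← Real.rpow_natCast ρ 2, ← Real.rpow_mul hρ0.le]
        norm_num
      rw [h1]
      exact Real.rpow_le_rpow_of_exponent_ge hρ0 hρ1 (by linarith)
    calc K * (1/(θ - 1 + 1)) = (ρ^2) ^ (α - θ/2) / ((α - θ/2) * θ) := by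
          rw [hK, sub_add_cancel]; field_simp [hp.ne', hθ0.ne']
      _ ≤ ρ ^ α / ((α - θ/2) * θ) := by
          gcongr
      _ = 1/((α - θ/2)*θ) * ρ ^ α := by ring
  · filter_upwards [ae_restrict_mem measurableSet_Ioo] with r hr
    apply setIntegral_nonneg measurableSet_Ioo
    intro u hu
    have hu0 : 0 < u := hu.1
    have hr0 : 0 < r := hr.1
    positivity
  · filter_upwards [ae_restrict_mem measurableSet_Ioo] with r hr
    exact hinner r hr
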